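/- Let α ∈ [−π/4, π/4] and define f_α(θ) = cos(θ+α) + √(cos(2θ)·cos(2α)) for θ ∈ [−π/4, π/4]. Then the maximum of f_α over [−π/4, π/4] exists and equals (1/√2)·((1−sin(2α))^{1/3} + (1+sin(2α))^{1/3})^{3/2}; that is, f_α(θ) ≤ (1/√2)·((1−sin(2α))^{1/3} + (1+sin(2α))^{1/3})^{3/2} for all θ ∈ [−π/4, π/4], and this bound is attained at some θ ∈ [−π/4, π/4]. -/

import Mathlib

open Real

noncomputable section

private lemma cube_rpow_third {x : ℝ} (hx : 0 ≤ x) : (x ^ ((1:ℝ)/3)) ^ 3 = x := by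
  rw [← Real.rpow_natCast (x ^ ((1:ℝ)/3)) 3, ← Real.rpow_mul hx]
  norm_num

private lemma sq_rpow_third {b : ℝ} (hb : 0 ≤ b) :
    ((b ^ 2) : ℝ) ^ ((1:ℝ)/3) = (b ^ ((1:ℝ)/3)) ^ 2 := by
  rw [← Real.rpow_natCast b 2, ← Real.rpow_natCast (b ^ ((1:ℝ)/3)) 2,
    ← Real.rpow_mul hb, ← Real.rpow_mul hb]
  norm_num

private lemma rpow_three_halves {W : ℝ} (hW : 0 ≤ W) :
    W ^ ((3:ℝ)/2) = W * Real.sqrt W := by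
  rw [show ((3:ℝ)/2) = (3:ℝ) * (1/2) by norm_num, Real.rpow_mul hW,
    ← Real.sqrt_eq_rpow, show (3:ℝ) = ((3:ℕ):ℝ) by norm_num, Real.rpow_natCast,
    show W^(3:ℕ) = W^2 * W by ring, Real.sqrt_mul (sq_nonneg W), Real.sqrt_sq hW]

private lemma cos_sub_sin_nonneg {θ : ℝ} (h : θ ∈ Set.Icc (-(π/4)) (π/4)) :
    0 ≤ Real.cos θ - Real.sin θ ∧ 0 ≤ Real.cos θ + Real.sin θ := by
  obtain ⟨h1, h2⟩ := h
  have hpi := Real.pi_pos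
  have hc1 : 0 ≤ Real.cos (θ + π/4) :=
    Real.cos_nonneg_of_mem_Icc ⟨by linarith, by linarith⟩
  have hc2 : 0 ≤ Real.cos (θ - π/4) :=
    Real.cos_nonneg_of_mem_Icc ⟨by linarith, by linarith⟩
  rw [Real.cos_add, Real.cos_pi_div_four, Real.sin_pi_div_four] at hc1
  rw [Real.cos_sub, Real.cos_pi_div_four, Real.sin_pi_div_four] at hc2
  have hs2 : Real.sqrt 2 * Real.sqrt 2 = 2 := Real.mul_self_sqrt (by norm_num)
  have hs0 : 0 ≤ Real.sqrt 2 := Real.sqrt_nonneg 2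
  constructor <;> nlinarith [mul_nonneg hs0 hc1, mul_nonneg hs0 hc2]

set_option maxHeartbeats 1000000 in
/-- Hölder-type key inequality via two Cauchy–Schwarz steps. -/
private lemma key_ineq {m n p q X Y : ℝ} (hm : 0 ≤ m) (hn : 0 ≤ n)
    (hp : 0 ≤ p) (hq : 0 ≤ q) (hX : 0 ≤ X) (hY : 0 ≤ Y)
    (hm2 : m ^ 2 = p * X ^ 3) (hn2 : n ^ 2 = q * Y ^ 3)
    (hpq : p ^ 2 + q ^ 2 = 2) :
    (m + n) ^ 4 ≤ 2 * (X ^ 2 + Y ^ 2) ^ 3 := by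
  have hmn : 0 ≤ m * n := mul_nonneg hm hn
  have h1 : 2 * (m * n) ≤ p * X * Y ^ 2 + q * X ^ 2 * Y := by
    nlinarith [sq_nonneg (p * X * Y ^ 2 - q * X ^ 2 * Y), sq_nonneg (m * n),
      mul_nonneg (mul_nonneg hp hX) (sq_nonneg Y),
      mul_nonneg (mul_nonneg hq hY) (sq_nonneg X),
      sq_nonneg (p * X * Y ^ 2 + q * X ^ 2 * Y - 2 * (m * n))]
  have h2 : (m + n) ^ 2 ≤ (p * X + q * Y) * (X ^ 2 + Y ^ 2) := by nlinarith [h1]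
  have h3 : (p * X + q * Y) ^ 2 ≤ 2 * (X ^ 2 + Y ^ 2) := by
    nlinarith [sq_nonneg (p * Y - q * X)]
  calc (m + n) ^ 4 = ((m + n) ^ 2) ^ 2 := by ring
    _ ≤ ((p * X + q * Y) * (X ^ 2 + Y ^ 2)) ^ 2 := by
        apply pow_le_pow_left₀ (sq_nonneg _) h2
    _ = (p * X + q * Y) ^ 2 * (X ^ 2 + Y ^ 2) ^ 2 := by ring
    _ ≤ 2 * (X ^ 2 + Y ^ 2) * (X ^ 2 + Y ^ 2) ^ 2 :=
        mul_le_mul_of_nonneg_right h3 (by positivity)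
    _ = 2 * (X ^ 2 + Y ^ 2) ^ 3 := by ring

set_option maxHeartbeats 1000000 in
theorem max_cos_add_sqrt_cos_mul
    (α : ℝ) (hα : α ∈ Set.Icc (-(π / 4)) (π / 4)) :
    (∀ θ ∈ Set.Icc (-(π / 4)) (π / 4),
        Real.cos (θ + α) + Real.sqrt (Real.cos (2 * θ) * Real.cos (2 * α)) ≤
          1 / Real.sqrt 2 *
            ((1 - Real.sin (2 * α)) ^ ((1 : ℝ) / 3) +
              (1 + Real.sin (2 * α)) ^ ((1 : ℝ) / 3)) ^ ((3 : ℝ) / 2)) ∧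
    (∃ θ ∈ Set.Icc (-(π / 4)) (π / 4),
        Real.cos (θ + α) + Real.sqrt (Real.cos (2 * θ) * Real.cos (2 * α)) =
          1 / Real.sqrt 2 *
            ((1 - Real.sin (2 * α)) ^ ((1 : ℝ) / 3) +
              (1 + Real.sin (2 * α)) ^ ((1 : ℝ) / 3)) ^ ((3 : ℝ) / 2)) := by
  obtain ⟨hb0, ha0⟩ := cos_sub_sin_nonneg hα
  set a : ℝ := Real.cos α + Real.sin α with ha_def
  set b : ℝ := Real.cos α - Real.sin α with hb_def
  have hsc : Real.sin α ^ 2 + Real.cos α ^ 2 = 1 := Real.sin_sq_add_cos_sq α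
  have h1ms : 1 - Real.sin (2 * α) = b ^ 2 := by
    rw [Real.sin_two_mul, hb_def]; linear_combination -hsc
  have h1ps : 1 + Real.sin (2 * α) = a ^ 2 := by
    rw [Real.sin_two_mul, ha_def]; linear_combination -hsc
  have hc2α : Real.cos (2 * α) = a * b := by
    rw [Real.cos_two_mul, ha_def, hb_def]; linear_combination hsc
  set X : ℝ := b ^ ((1:ℝ)/3) with hX_def
  set Y : ℝ := a ^ ((1:ℝ)/3) with hY_def
  have hX0 : 0 ≤ X := Real.rpow_nonneg hb0 _
  have hY0 : 0 ≤ Y := Real.rpow_nonneg ha0 _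
  have hX3 : X ^ 3 = b := cube_rpow_third hb0
  have hY3 : Y ^ 3 = a := cube_rpow_third ha0
  set W : ℝ := X ^ 2 + Y ^ 2 with hW_def
  have hW0 : 0 ≤ W := by positivity
  have hab2 : a ^ 2 + b ^ 2 = 2 := by
    rw [ha_def, hb_def]; linear_combination 2 * hsc
  have hab : 0 < a ∨ 0 < b := by
    by_contra hcon
    push_neg at hcon
    obtain ⟨h1, h2⟩ := hcon
    have haz : a = 0 := le_antisymm h1 ha0
    have hbz : b = 0 := le_antisymm h2 hb0
    rw [haz, hbz] at hab2; norm_num at hab2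
  have hWpos : 0 < W := by
    rw [hW_def]
    rcases hab with h | h
    · have hY' : 0 < Y := Real.rpow_pos_of_pos h _
      have := sq_nonneg X
      linarith [pow_pos hY' 2]
    · have hX' : 0 < X := Real.rpow_pos_of_pos h _
      have := sq_nonneg Y
      linarith [pow_pos hX' 2]
  have hRHS : ((1 - Real.sin (2 * α)) ^ ((1 : ℝ) / 3) +
      (1 + Real.sin (2 * α)) ^ ((1 : ℝ) / 3)) = W := by
    rw [h1ms, h1ps, sq_rpow_third hb0, sq_rpow_third ha0]
  have hsqrt2 : Real.sqrt 2 * Real.sqrt 2 = 2 := Real.mul_self_sqrt (by norm_num)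
  have hsqrt2pos : 0 < Real.sqrt 2 := Real.sqrt_pos.mpr (by norm_num)
  have hsW : Real.sqrt W * Real.sqrt W = W := Real.mul_self_sqrt hW0
  have hsWpos : 0 < Real.sqrt W := Real.sqrt_pos.mpr hWpos
  have hRHS' : 1 / Real.sqrt 2 *
      ((1 - Real.sin (2 * α)) ^ ((1 : ℝ) / 3) +
        (1 + Real.sin (2 * α)) ^ ((1 : ℝ) / 3)) ^ ((3 : ℝ) / 2)
      = W * Real.sqrt W / Real.sqrt 2 := by
    rw [hRHS, rpow_three_halves hW0]; ring
  constructor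
  · -- upper bound
    intro θ hθ
    obtain ⟨hq0, hp0⟩ := cos_sub_sin_nonneg hθ
    set p : ℝ := Real.cos θ + Real.sin θ with hp_def
    set q : ℝ := Real.cos θ - Real.sin θ with hq_def
    have hscθ : Real.sin θ ^ 2 + Real.cos θ ^ 2 = 1 := Real.sin_sq_add_cos_sq θ
    have hpq2 : p ^ 2 + q ^ 2 = 2 := by
      rw [hp_def, hq_def]; linear_combination 2 * hscθ
    have hc2θ : Real.cos (2 * θ) = p * q := by
      rw [Real.cos_two_mul, hp_def, hq_def]; linear_combination hscθ
    have hcθα : Real.cos (θ + α) = (p * b + q * a) / 2 := by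
      rw [Real.cos_add, hp_def, hq_def, ha_def, hb_def]; ring
    set m : ℝ := Real.sqrt (p * b) with hm_def
    set n : ℝ := Real.sqrt (q * a) with hn_def
    have hm0 : 0 ≤ m := Real.sqrt_nonneg _
    have hn0 : 0 ≤ n := Real.sqrt_nonneg _
    have hm2 : m ^ 2 = p * b := Real.sq_sqrt (mul_nonneg hp0 hb0)
    have hn2 : n ^ 2 = q * a := Real.sq_sqrt (mul_nonneg hq0 ha0)
    have hsqrtprod : Real.sqrt (Real.cos (2 * θ) * Real.cos (2 * α)) = m * n := by
      rw [hc2θ, hc2α, show p * q * (a * b) = (p * b) * (q * a) by ring,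
        Real.sqrt_mul (mul_nonneg hp0 hb0)]
    have hkey : (m + n) ^ 4 ≤ 2 * W ^ 3 := by
      have h := key_ineq hm0 hn0 hp0 hq0 hX0 hY0
        (by rw [hm2, hX3]) (by rw [hn2, hY3]) hpq2
      rw [hW_def]; exact h
    have hbound : (m + n) ^ 2 ≤ Real.sqrt 2 * (W * Real.sqrt W) := by
      have h2W : Real.sqrt 2 * (W * Real.sqrt W) = Real.sqrt (2 * W ^ 3) := by
        rw [show (2 : ℝ) * W ^ 3 = 2 * (W ^ 2 * W) by ring,
          Real.sqrt_mul (by norm_num : (0:ℝ) ≤ 2),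
          Real.sqrt_mul (sq_nonneg W), Real.sqrt_sq hW0]
      rw [h2W, show (m + n) ^ 2 = Real.sqrt (((m + n) ^ 2) ^ 2) from
        (Real.sqrt_sq (sq_nonneg _)).symm]
      apply Real.sqrt_le_sqrt
      calc ((m + n) ^ 2) ^ 2 = (m + n) ^ 4 := by ring
        _ ≤ 2 * W ^ 3 := hkey
    rw [hRHS', hcθα, hsqrtprod]
    have hfinal : (p * b + q * a) / 2 + m * n = (m + n) ^ 2 / 2 := by
      rw [← hm2, ← hn2]; ring
    rw [hfinal, div_le_div_iff₀ (by norm_num : (0:ℝ) < 2) hsqrt2pos]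
    have hmul := mul_le_mul_of_nonneg_left hbound hsqrt2pos.le
    have hred : Real.sqrt 2 * (Real.sqrt 2 * (W * Real.sqrt W))
        = 2 * (W * Real.sqrt W) := by rw [← mul_assoc, hsqrt2]
    rw [hred] at hmul
    linarith
  · -- the maximum is attained
    set p : ℝ := Real.sqrt 2 * X / Real.sqrt W with hp_def
    set q : ℝ := Real.sqrt 2 * Y / Real.sqrt W with hq_def
    have hp0 : 0 ≤ p := by positivity
    have hq0 : 0 ≤ q := by positivity
    have hp2 : p ^ 2 = 2 * X ^ 2 / W := by
      rw [hp_def, div_pow, mul_pow, Real.sq_sqrt (by norm_num : (0:ℝ) ≤ 2),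
        Real.sq_sqrt hW0]
    have hq2 : q ^ 2 = 2 * Y ^ 2 / W := by
      rw [hq_def, div_pow, mul_pow, Real.sq_sqrt (by norm_num : (0:ℝ) ≤ 2),
        Real.sq_sqrt hW0]
    have hpq2 : p ^ 2 + q ^ 2 = 2 := by
      rw [hp2, hq2, ← add_div,
        show 2 * X ^ 2 + 2 * Y ^ 2 = 2 * W by rw [hW_def]; ring,
        mul_div_assoc, div_self hWpos.ne', mul_one]
    have hpqprod : 0 ≤ p * q := mul_nonneg hp0 hq0
    set x : ℝ := (p - q) / 2 with hx_def
    have hx2 : x ^ 2 ≤ 1 / 2 := by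
      have he : x ^ 2 = (2 - 2 * (p * q)) / 4 := by
        rw [hx_def]; linear_combination (1/4 : ℝ) * hpq2
      rw [he]; linarith [hpqprod]
    have hxabs : |x| ≤ Real.sqrt 2 / 2 := by
      have h12 : Real.sqrt (1/2) = Real.sqrt 2 / 2 := by
        rw [show (1/2 : ℝ) = (Real.sqrt 2 / 2) ^ 2 by
          rw [div_pow, Real.sq_sqrt (by norm_num : (0:ℝ) ≤ 2)]; norm_num]
        exact Real.sqrt_sq (by positivity)
      calc |x| = Real.sqrt (x ^ 2) := (Real.sqrt_sq_eq_abs x).symm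
        _ ≤ Real.sqrt (1/2) := Real.sqrt_le_sqrt hx2
        _ = Real.sqrt 2 / 2 := h12
    have hs2le : Real.sqrt 2 ≤ 2 := by
      have h4 : Real.sqrt 4 = 2 := by
        rw [show (4:ℝ) = 2 ^ 2 by norm_num]
        exact Real.sqrt_sq (by norm_num)
      linarith [Real.sqrt_le_sqrt (show (2:ℝ) ≤ 4 by norm_num), h4]
    have hx1 : |x| ≤ 1 := hxabs.trans (by linarith)
    obtain ⟨hxlo, hxhi⟩ := abs_le.mp hx1
    obtain ⟨hxlo', hxhi'⟩ := abs_le.mp hxabs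
    have hpi := Real.pi_pos
    refine ⟨Real.arcsin x, ⟨?_, ?_⟩, ?_⟩
    · have hmono : Real.arcsin (-(Real.sqrt 2 / 2)) ≤ Real.arcsin x :=
        Real.monotone_arcsin hxlo'
      have h4 : Real.arcsin (-(Real.sqrt 2 / 2)) = -(π/4) := by
        rw [← Real.sin_pi_div_four, ← Real.sin_neg]
        exact Real.arcsin_sin (by linarith) (by linarith)
      rw [h4] at hmono; exact hmono
    · have hmono : Real.arcsin x ≤ Real.arcsin (Real.sqrt 2 / 2) :=
        Real.monotone_arcsin hxhi'
      have h4 : Real.arcsin (Real.sqrt 2 / 2) = π/4 := by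
        rw [← Real.sin_pi_div_four]
        exact Real.arcsin_sin (by linarith) (by linarith)
      rw [h4] at hmono; exact hmono
    · set θ := Real.arcsin x with hθ_def
      have hsinθ : Real.sin θ = x := Real.sin_arcsin hxlo hxhi
      have hcosθ : Real.cos θ = (p + q) / 2 := by
        rw [hθ_def, Real.cos_arcsin,
          show 1 - x ^ 2 = ((p + q) / 2) ^ 2 by
            rw [hx_def]; linear_combination (-1/2 : ℝ) * hpq2]
        exact Real.sqrt_sq (by positivity)
      have hps : Real.cos θ + Real.sin θ = p := by
        rw [hcosθ, hsinθ, hx_def]; ring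
      have hqs : Real.cos θ - Real.sin θ = q := by
        rw [hcosθ, hsinθ, hx_def]; ring
      have hscθ : Real.sin θ ^ 2 + Real.cos θ ^ 2 = 1 := Real.sin_sq_add_cos_sq θ
      have hc2θ : Real.cos (2 * θ) = p * q := by
        rw [Real.cos_two_mul, ← hps, ← hqs]; linear_combination hscθ
      have hcθα : Real.cos (θ + α) = (p * b + q * a) / 2 := by
        rw [Real.cos_add, ← hps, ← hqs, ha_def, hb_def]; ring
      have hpq_val : p * q = 2 * (X * Y) / W := by
        rw [hp_def, hq_def, div_mul_div_comm,
          show Real.sqrt 2 * X * (Real.sqrt 2 * Y)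
            = (Real.sqrt 2 * Real.sqrt 2) * (X * Y) by ring, hsqrt2, hsW]
      have hprodval : Real.cos (2 * θ) * Real.cos (2 * α)
          = (Real.sqrt 2 * (X ^ 2 * Y ^ 2) / Real.sqrt W) ^ 2 := by
        rw [hc2θ, hc2α, hpq_val, ← hX3, ← hY3, div_pow, mul_pow,
          Real.sq_sqrt (by norm_num : (0:ℝ) ≤ 2), Real.sq_sqrt hW0,
          div_mul_eq_mul_div]
        congr 1
        ring
      have hsqrtval : Real.sqrt (Real.cos (2 * θ) * Real.cos (2 * α))
          = Real.sqrt 2 * (X ^ 2 * Y ^ 2) / Real.sqrt W := by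
        rw [hprodval]; exact Real.sqrt_sq (by positivity)
      rw [hRHS', hcθα, hsqrtval]
      have hsum : p * b + q * a = Real.sqrt 2 * (X ^ 4 + Y ^ 4) / Real.sqrt W := by
        rw [← hX3, ← hY3, hp_def, hq_def, div_mul_eq_mul_div, div_mul_eq_mul_div,
          ← add_div]
        congr 1
        ring
      rw [hsum]
      have e1 : Real.sqrt 2 * (X ^ 4 + Y ^ 4) / Real.sqrt W / 2
          + Real.sqrt 2 * (X ^ 2 * Y ^ 2) / Real.sqrt W
          = Real.sqrt 2 * W ^ 2 / (2 * Real.sqrt W) := by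
        rw [hW_def]
        field_simp
        ring
      have e2 : Real.sqrt 2 * W ^ 2 / (2 * Real.sqrt W) = W * Real.sqrt W / Real.sqrt 2 := by
        rw [div_eq_div_iff (by positivity) hsqrt2pos.ne']
        linear_combination W ^ 2 * hsqrt2 - 2 * W * hsW
      exact e1.trans e2
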